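/- arXiv:2106.08748 — 7 statements merged into one kernel-verified Lean document; each statement's English description precedes it below -/
import Mathlib

section
/- Let n ≥ 1, let g : EuclideanSpace ℝ (Fin n) → ℝ be differentiable, and let x⋆ be a point. If for every x ≠ x⋆ one has ⟪∇g(x), (x − x⋆)/‖x − x⋆‖⟫ > 0, then g is invex, i.e., every point x with ∇g(x) = 0 satisfies g(x) ≤ g(y) for all y. (Proposition 2) -/
open RealInnerProductSpace

/-- Proposition 2: if `⟪∇g x, (x − x⋆)/‖x − x⋆‖⟫ > 0` for every `x ≠ x⋆`,
then `g` is invex: every stationary point is a global minimizer. -/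
theorem proposition_2 (n : ℕ) (hn : 1 ≤ n)
    (g : EuclideanSpace ℝ (Fin n) → ℝ)
    (hg : Differentiable ℝ g)
    (xstar : EuclideanSpace ℝ (Fin n))
    (hineq : ∀ x, x ≠ xstar →
      ⟪gradient g x, (‖x - xstar‖)⁻¹ • (x - xstar)⟫ > 0) :
    ∀ x, gradient g x = 0 → ∀ y, g x ≤ g y := by
  intro x hx y
  -- x must be xstar
  have hxx : x = xstar := by
    by_contra h
    have := hineq x h
    rw [hx] at this
    simp at this
  subst hxx
  rcases eq_or_ne y x with rfl | hy
  · rfl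
  set v := y - x with hv
  have hvne : v ≠ 0 := sub_ne_zero.mpr hy
  set φ : ℝ → ℝ := fun t => g (x + t • v) with hφ
  have hL : ∀ t : ℝ, HasDerivAt (fun t : ℝ => x + t • v) v t := by
    intro t
    simpa using ((hasDerivAt_id t).smul_const v).const_add x
  have hderiv : ∀ t : ℝ, HasDerivAt φ (⟪gradient g (x + t • v), v⟫) t := by
    intro t
    have hgrad := (hg (x + t • v)).hasGradientAt
    have hf : HasFDerivAt g
        (InnerProductSpace.toDual ℝ _ (gradient g (x + t • v))) (x + t • v) :=
      hgrad.hasFDerivAt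
    have := hf.comp_hasDerivAt t (hL t)
    simp only [InnerProductSpace.toDual_apply_apply] at this
    exact this
  have hpos : ∀ t ∈ Set.Ioo (0:ℝ) 1, 0 < ⟪gradient g (x + t • v), v⟫ := by
    intro t ht
    have hne : x + t • v ≠ x := by
      intro h
      apply hvne
      have : t • v = 0 := by
        have := congrArg (· - x) h
        simpa using this
      rcases smul_eq_zero.mp this with h' | h'
      · exact absurd h' (ne_of_gt ht.1)
      · exact h'
    have h1 := hineq _ hne
    have hsub : x + t • v - x = t • v := by abel
    rw [hsub] at h1
    rw [real_inner_smul_right] at h1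
    have hscale : 0 < (‖t • v‖)⁻¹ := by
      rw [inv_pos, norm_pos_iff]
      exact smul_ne_zero (ne_of_gt ht.1) hvne
    rw [real_inner_smul_right] at h1
    nlinarith [mul_pos hscale ht.1]
  have hmono : StrictMonoOn φ (Set.Icc 0 1) := by
    apply strictMonoOn_of_deriv_pos (convex_Icc 0 1)
    · exact (hg.comp (differentiable_id.smul_const v |>.const_add x)).continuous.continuousOn
    · intro t ht
      rw [interior_Icc] at ht
      rw [(hderiv t).deriv]
      exact hpos t ht
  have h01 := hmono.le_iff_le (Set.left_mem_Icc.mpr zero_le_one) (Set.right_mem_Icc.mpr zero_le_one)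
  have := (hmono (Set.left_mem_Icc.mpr zero_le_one) (Set.right_mem_Icc.mpr zero_le_one) zero_lt_one).le
  simpa [hφ, hv] using this
end

section
/- Let n ≥ m ≥ 1, let f : EuclideanSpace ℝ (Fin n) → EuclideanSpace ℝ (Fin m) be differentiable with derivative (Fréchet differential) of rank m (i.e., surjective as a linear map) at every point, and let g : EuclideanSpace ℝ (Fin m) → ℝ be invex. Then the composition h = g ∘ f is invex, i.e., every point x at which the Fréchet derivative of h vanishes satisfies h(x) ≤ h(y) for all y. (Property 1 of invex functions) -/
/-- Property 1 of invex functions: if `f : ℝⁿ → ℝᵐ` (`n ≥ m`) is differentiable with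
Fréchet derivative of rank `m` (surjective) at every point, and `g : ℝᵐ → ℝ` is invex,
then `h = g ∘ f` is invex. -/
theorem property_1 (n m : ℕ) (hm : 1 ≤ m) (hnm : m ≤ n)
    (f : EuclideanSpace ℝ (Fin n) → EuclideanSpace ℝ (Fin m))
    (hf : Differentiable ℝ f)
    (hrank : ∀ x, Function.Surjective (fderiv ℝ f x))
    (g : EuclideanSpace ℝ (Fin m) → ℝ)
    (hg : Differentiable ℝ g)
    (hg_invex : ∀ x, gradient g x = 0 → ∀ y, g x ≤ g y) :
    ∀ x, fderiv ℝ (g ∘ f) x = 0 → ∀ y, (g ∘ f) x ≤ (g ∘ f) y := by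
  intro x hx y
  have hcomp : fderiv ℝ (g ∘ f) x = (fderiv ℝ g (f x)).comp (fderiv ℝ f x) :=
    fderiv_comp x (hg (f x)) (hf x)
  have hzero : fderiv ℝ g (f x) = 0 := by
    ext v
    obtain ⟨u, hu⟩ := hrank x v
    have := congrArg (fun L => L u) (hcomp ▸ hx)
    simpa [hu] using this
  have hgrad : gradient g (f x) = 0 := by
    rw [gradient, hzero, map_zero]
  exact hg_invex (f x) hgrad (f y)
end

section
/- Let n ≥ 1 and let f : EuclideanSpace ℝ (Fin n) → ℝ be differentiable. Then the following are equivalent: (i) there exists a function η : EuclideanSpace ℝ (Fin n) → EuclideanSpace ℝ (Fin n) → EuclideanSpace ℝ (Fin n) such that for all x₁, x₂, f(x₁) − f(x₂) ≥ ⟪η x₁ x₂, ∇f(x₂)⟫; (ii) every stationary point of f is a global minimizer, i.e., for every x₂ with ∇f(x₂) = 0 and every x₁, f(x₂) ≤ f(x₁). (Characterization of invexity used throughout the paper) -/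
open RealInnerProductSpace

/-- Characterization of invexity: a differentiable function admits an invexity
function `η` (classical definition) if and only if every stationary point is a
global minimizer. -/
theorem invex_characterization (n : ℕ) (hn : 1 ≤ n)
    (f : EuclideanSpace ℝ (Fin n) → ℝ)
    (hf : Differentiable ℝ f) :
    (∃ η : EuclideanSpace ℝ (Fin n) → EuclideanSpace ℝ (Fin n) → EuclideanSpace ℝ (Fin n),
        ∀ x₁ x₂, f x₁ - f x₂ ≥ ⟪η x₁ x₂, gradient f x₂⟫) ↔
    (∀ x₂, gradient f x₂ = 0 → ∀ x₁, f x₂ ≤ f x₁) := by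
  constructor
  · rintro ⟨η, hη⟩ x₂ hg x₁
    have := hη x₁ x₂
    rw [hg, inner_zero_right] at this
    linarith
  · intro h
    classical
    refine ⟨fun x₁ x₂ => if hg : gradient f x₂ = 0 then 0
      else ((f x₁ - f x₂) / ‖gradient f x₂‖ ^ 2) • gradient f x₂, fun x₁ x₂ => ?_⟩
    by_cases hg : gradient f x₂ = 0
    · simp only [hg, dif_pos]
      rw [inner_zero_right]
      linarith [h x₂ hg x₁]
    · simp only [dif_neg hg]
      rw [real_inner_smul_left, real_inner_self_eq_norm_sq]
      have hne : ‖gradient f x₂‖ ^ 2 ≠ 0 := pow_ne_zero _ (norm_ne_zero_iff.mpr hg)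
      field_simp
      exact le_rfl
end

section
/- Let n ≥ 1 and let f : EuclideanSpace ℝ (Fin n) → ℝ be differentiable. Suppose f is strongly quasi-convex: there exists γ > 0 such that for all x, y and all t ∈ [0,1], f(t • x + (1 − t) • y) ≤ max (f x) (f y) − γ * t * (1 − t) * ‖x − y‖². Then f is invex, i.e., every point x with ∇f(x) = 0 satisfies f(x) ≤ f(y) for all y. (The paper's claim that all strongly quasi-convex functions are invex) -/
/-- Every strongly quasi-convex differentiable function is invex. -/
theorem strongly_quasiconvex_invex (n : ℕ) (hn : 1 ≤ n)
    (f : EuclideanSpace ℝ (Fin n) → ℝ)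
    (hf : Differentiable ℝ f)
    (hsqc : ∃ γ : ℝ, 0 < γ ∧ ∀ x y : EuclideanSpace ℝ (Fin n), ∀ t : ℝ,
      t ∈ Set.Icc (0 : ℝ) 1 →
      f (t • x + (1 - t) • y) ≤ max (f x) (f y) - γ * t * (1 - t) * ‖x - y‖ ^ 2) :
    ∀ x, gradient f x = 0 → ∀ y, f x ≤ f y := by
  obtain ⟨γ, hγ, hq⟩ := hsqc
  intro x hx y
  by_contra hlt
  push_neg at hlt
  have hxy : y ≠ x := by rintro rfl; exact lt_irrefl _ hlt
  set v := y - x with hvdef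
  have hv : 0 < ‖v‖ := norm_pos_iff.mpr (sub_ne_zero.mpr hxy)
  have hfd : fderiv ℝ f x = 0 := by
    have h1 := congrArg (InnerProductSpace.toDual ℝ (EuclideanSpace ℝ (Fin n))) hx
    rw [gradient] at h1
    simpa using h1
  set g : ℝ → ℝ := fun t => f (x + t • v) with hg
  have hcurve : ∀ t : ℝ, HasDerivAt (fun s : ℝ => x + s • v) v t := by
    intro t
    simpa using ((hasDerivAt_id t).smul_const v).const_add x
  have hd : HasDerivAt g 0 0 := by
    have h := (hf (x + (0:ℝ) • v)).hasFDerivAt.comp_hasDerivAt 0 (hcurve 0)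
    simp only [zero_smul, add_zero] at h
    simp only [hfd, ContinuousLinearMap.zero_apply] at h
    exact h
  have hslope := hasDerivAt_iff_tendsto_slope.mp hd
  set c := γ * ‖v‖ ^ 2 with hc
  have hcpos : 0 < c := by positivity
  have hslope' : Filter.Tendsto (slope g 0) (nhdsWithin 0 (Set.Ioi 0)) (nhds 0) :=
    hslope.mono_left (nhdsWithin_mono _ (fun t ht => ne_of_gt ht))
  have hev1 : ∀ᶠ t in nhdsWithin (0:ℝ) (Set.Ioi 0), -c/4 < slope g 0 t :=
    hslope'.eventually (eventually_gt_nhds (by linarith))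
  have hev2 : ∀ᶠ t in nhdsWithin (0:ℝ) (Set.Ioi 0), t ∈ Set.Ioo (0:ℝ) (1/2) :=
    Ioo_mem_nhdsGT_of_mem ⟨le_refl 0, by norm_num⟩
  obtain ⟨t, h1, h2⟩ := (hev1.and hev2).exists
  obtain ⟨ht0, ht1⟩ := h2
  -- upper bound on slope
  have key : g t ≤ g 0 - γ * t * (1 - t) * ‖v‖ ^ 2 := by
    have h := hq y x t ⟨le_of_lt ht0, by linarith⟩
    have heq : t • y + (1 - t) • x = x + t • v := by
      simp [hvdef, smul_sub, sub_smul]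
      abel
    rw [heq] at h
    have hmax : max (f y) (f x) = f x := max_eq_right (le_of_lt hlt)
    rw [hmax] at h
    simpa [hg] using h
  have hslope_le : slope g 0 t ≤ -(γ * (1 - t) * ‖v‖ ^ 2) := by
    rw [slope_def_field]
    have : g t - g 0 ≤ -(γ * (1 - t) * ‖v‖ ^ 2) * t := by nlinarith [key]
    rw [sub_zero, div_le_iff₀ ht0]
    exact this
  have : -(γ * (1 - t) * ‖v‖ ^ 2) ≤ -c/2 := by
    rw [hc]
    nlinarith [sq_nonneg ‖v‖, hv]
  linarith
end

section
/- Let f : ℝ → ℝ be differentiable and invex (every x with f'(x) = 0 satisfies f(x) ≤ f(y) for all y). Then for every threshold c ∈ ℝ, the lower contour set {x : ℝ | f(x) ≤ c} is order-connected, i.e., it is an interval: whenever a and b lie in the set and a ≤ m ≤ b, then m lies in the set. (One-dimensional case of the paper's claim that the set (−∞, θ] of an invex function is a connected (invex) set, Table 1) -/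
/-- One-dimensional case: the lower contour set `{x | f x ≤ c}` of a
differentiable invex function `f : ℝ → ℝ` is order-connected (an interval). -/
theorem invex_lower_contour_ordConnected
    (f : ℝ → ℝ) (hf : Differentiable ℝ f)
    (hinvex : ∀ x, deriv f x = 0 → ∀ y, f x ≤ f y) :
    ∀ c : ℝ, ∀ a b m : ℝ, f a ≤ c → f b ≤ c → a ≤ m → m ≤ b → f m ≤ c := by
  intro c a b m ha hb ham hmb
  by_contra hc
  push_neg at hc
  have hab : a ≤ b := ham.trans hmb
  obtain ⟨x, hx, hmax⟩ := (isCompact_Icc (a := a) (b := b)).exists_isMaxOn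
    ⟨m, ham, hmb⟩ (hf.continuous.continuousOn)
  have hxm : f m ≤ f x := hmax ⟨ham, hmb⟩
  have hxa : x ≠ a := by rintro rfl; exact absurd (hxm.trans ha) (not_le.2 hc)
  have hxb : x ≠ b := by rintro rfl; exact absurd (hxm.trans hb) (not_le.2 hc)
  have hx' : x ∈ Set.Ioo a b := ⟨hx.1.lt_of_ne (Ne.symm hxa), hx.2.lt_of_ne hxb⟩
  have hloc : IsLocalMax f x :=
    hmax.isLocalMax (Icc_mem_nhds hx'.1 hx'.2)
  have hd : deriv f x = 0 := hloc.deriv_eq_zero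
  exact absurd ((hinvex x hd a).trans ha) (not_le.2 (lt_of_lt_of_le hc hxm))
end

section
/- Let f, h : ℝ → ℝ be differentiable, let x⋆ ∈ ℝ be a global minimizer of f, suppose f'(x) ≠ 0 for all x ≠ x⋆, and suppose h'(x) · f'(x) > 0 for all x ≠ x⋆. Then h is invex and x⋆ is a global minimizer of h: for every x with h'(x) = 0 and every y, h(x) ≤ h(y), and h(x⋆) ≤ h(y) for all y. (One-dimensional version of Proposition 1, proved in the appendix: a modification whose derivative never opposes the derivative of an invex function preserves invexity) -/
/-- One-dimensional version of Proposition 1: if `x⋆` is a global minimizer of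
`f`, `f' x ≠ 0` away from `x⋆`, and `h' x * f' x > 0` away from `x⋆`, then `h`
is invex and `x⋆` is a global minimizer of `h`. -/
theorem proposition_1_one_dim
    (f h : ℝ → ℝ) (hf : Differentiable ℝ f) (hh : Differentiable ℝ h)
    (xstar : ℝ)
    (hmin : ∀ y, f xstar ≤ f y)
    (hf' : ∀ x, x ≠ xstar → deriv f x ≠ 0)
    (hsame : ∀ x, x ≠ xstar → deriv h x * deriv f x > 0) :
    (∀ x, deriv h x = 0 → ∀ y, h x ≤ h y) ∧ (∀ y, h xstar ≤ h y) := by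
  -- Sign of f' on the right of xstar
  have hright : ∀ x ∈ Set.Ioi xstar, 0 < deriv f x := by
    have := hasDerivWithinAt_forall_lt_or_forall_gt_of_forall_ne
      (f := f) (f' := deriv f) (convex_Ioi xstar)
      (fun x _ => ((hf x).hasDerivAt).hasDerivWithinAt)
      (m := 0) (fun x hx => hf' x (ne_of_gt hx))
    rcases this with hneg | hpos
    · exfalso
      have hanti : StrictAntiOn f (Set.Ici xstar) := by
        apply strictAntiOn_of_deriv_neg (convex_Ici xstar) hf.continuous.continuousOn
        intro x hx
        rw [interior_Ici] at hx
        exact hneg x hx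
      have := hanti (Set.self_mem_Ici) (by simp : xstar + 1 ∈ Set.Ici xstar) (by linarith)
      linarith [hmin (xstar + 1)]
    · exact hpos
  -- Sign of f' on the left of xstar
  have hleft : ∀ x ∈ Set.Iio xstar, deriv f x < 0 := by
    have := hasDerivWithinAt_forall_lt_or_forall_gt_of_forall_ne
      (f := f) (f' := deriv f) (convex_Iio xstar)
      (fun x _ => ((hf x).hasDerivAt).hasDerivWithinAt)
      (m := 0) (fun x hx => hf' x (ne_of_lt hx))
    rcases this with hneg | hpos
    · exact hneg
    · exfalso
      have hmono : StrictMonoOn f (Set.Iic xstar) := by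
        apply strictMonoOn_of_deriv_pos (convex_Iic xstar) hf.continuous.continuousOn
        intro x hx
        rw [interior_Iic] at hx
        exact hpos x hx
      have := hmono (by simp : xstar - 1 ∈ Set.Iic xstar) (Set.self_mem_Iic) (by linarith)
      linarith [hmin (xstar - 1)]
  -- Sign of h'
  have hhr : ∀ x ∈ Set.Ioi xstar, 0 < deriv h x := by
    intro x hx
    have h1 := hsame x (ne_of_gt hx)
    have h2 := hright x hx
    nlinarith
  have hhl : ∀ x ∈ Set.Iio xstar, deriv h x < 0 := by
    intro x hx
    have h1 := hsame x (ne_of_lt hx)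
    have h2 := hleft x hx
    nlinarith
  -- h is strictly monotone on Ici and strictly anti on Iic
  have hmonoh : StrictMonoOn h (Set.Ici xstar) := by
    apply strictMonoOn_of_deriv_pos (convex_Ici xstar) hh.continuous.continuousOn
    intro x hx; rw [interior_Ici] at hx; exact hhr x hx
  have hantih : StrictAntiOn h (Set.Iic xstar) := by
    apply strictAntiOn_of_deriv_neg (convex_Iic xstar) hh.continuous.continuousOn
    intro x hx; rw [interior_Iic] at hx; exact hhl x hx
  have hglobal : ∀ y, h xstar ≤ h y := by
    intro y
    rcases lt_trichotomy y xstar with hy | hy | hy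
    · exact le_of_lt (hantih (le_of_lt hy) Set.self_mem_Iic hy)
    · simp [hy]
    · exact le_of_lt (hmonoh Set.self_mem_Ici (le_of_lt hy) hy)
  refine ⟨fun x hx y => ?_, hglobal⟩
  have hxx : x = xstar := by
    by_contra hne
    have := hsame x hne
    rw [hx] at this
    simp at this
  rw [hxx]; exact hglobal y
end

section
/- Let n ≥ 1, let f : EuclideanSpace ℝ (Fin n) → EuclideanSpace ℝ (Fin n) be a bijection that is differentiable with invertible Fréchet derivative at every point, and let c ∈ EuclideanSpace ℝ (Fin n). Define h(x) = ‖f x − c‖². Then a point x is a stationary point of h (∇h(x) = 0) if and only if f(x) = c, and the unique point x₀ with f(x₀) = c is the unique global minimizer of h. In particular h is invex. (The paper's construction of an invex function as invertible network composed with a convex cone, whose centroid f⁻¹(c) is the unique minimum) -/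
/-- The paper's invertible-plus-cone construction: for an invertible
(everywhere-differentiable with invertible derivative) bijection `f` and
`h x = ‖f x − c‖²`, the stationary points of `h` are exactly the points with
`f x = c`, the unique such point is the unique (strict) global minimizer of
`h`, and in particular `h` is invex. -/
theorem invertible_cone_invex (n : ℕ) (hn : 1 ≤ n)
    (f : EuclideanSpace ℝ (Fin n) → EuclideanSpace ℝ (Fin n))
    (hf_bij : Function.Bijective f)
    (hf : Differentiable ℝ f)
    (hf_deriv : ∀ x, Function.Bijective (fderiv ℝ f x))
    (c : EuclideanSpace ℝ (Fin n))
    (h : EuclideanSpace ℝ (Fin n) → ℝ)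
    (hdef : ∀ x, h x = ‖f x - c‖ ^ 2) :
    (∀ x, gradient h x = 0 ↔ f x = c) ∧
    (∃! x₀, f x₀ = c) ∧
    (∀ x₀, f x₀ = c → ∀ y, y ≠ x₀ → h x₀ < h y) ∧
    (∀ x, gradient h x = 0 → ∀ y, h x ≤ h y) := by
  have hrepr : h = fun x => (inner ℝ (f x - c) (f x - c) : ℝ) := by
    funext x
    rw [hdef, real_inner_self_eq_norm_sq]
  have hkey : ∀ x, gradient h x = 0 ↔ f x = c := by
    intro x
    have hx' : HasFDerivAt f (fderiv ℝ f x) x := (hf x).hasFDerivAt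
    have hsub : HasFDerivAt (fun y => f y - c) (fderiv ℝ f x) x := hx'.sub_const c
    have hinner := hsub.inner ℝ hsub
    have hD : fderiv ℝ h x =
        (fderivInnerCLM ℝ (f x - c, f x - c)).comp
          ((fderiv ℝ f x).prod (fderiv ℝ f x)) := by
      rw [hrepr]
      exact hinner.fderiv
    have heval : ∀ v, fderiv ℝ h x v =
        2 * (inner ℝ (f x - c) (fderiv ℝ f x v) : ℝ) := by
      intro v
      rw [hD]
      simp only [ContinuousLinearMap.comp_apply, ContinuousLinearMap.prod_apply,
        fderivInnerCLM_apply]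
      rw [real_inner_comm ((fderiv ℝ f x) v)]
      ring
    have hgrad0 : gradient h x = 0 ↔ fderiv ℝ h x = 0 := by
      rw [gradient]
      constructor
      · intro h0
        have := congrArg (InnerProductSpace.toDual ℝ (EuclideanSpace ℝ (Fin n))) h0
        simpa using this
      · intro h0; rw [h0]; simp
    rw [hgrad0]
    constructor
    · intro h0
      obtain ⟨v, hv⟩ := (hf_deriv x).2 (f x - c)
      have := heval v
      rw [h0, hv] at this
      have h2 : (inner ℝ (f x - c) (f x - c) : ℝ) = 0 := by
        simpa using this.symm
      have := inner_self_eq_zero.mp h2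
      exact sub_eq_zero.mp this
    · intro hfx
      ext v
      rw [heval v, hfx]
      simp
  refine ⟨hkey, ?_, ?_, ?_⟩
  · obtain ⟨x₀, hx₀⟩ := hf_bij.2 c
    exact ⟨x₀, hx₀, fun y hy => hf_bij.1 (hy.trans hx₀.symm)⟩
  · intro x₀ hx₀ y hy
    rw [hdef, hdef, hx₀, sub_self, norm_zero, zero_pow (by norm_num : 2 ≠ 0)]
    have hne : f y - c ≠ 0 := sub_ne_zero.mpr (fun hc => hy (hf_bij.1 (hc.trans hx₀.symm)))
    exact pow_pos (norm_pos_iff.mpr hne) 2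
  · intro x hx y
    have hfx := (hkey x).mp hx
    rw [hdef, hdef, hfx, sub_self, norm_zero, zero_pow (by norm_num : 2 ≠ 0)]
    positivity
end
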